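/- Let A be a field, B a finite-dimensional commutative A-algebra, and L a field extension of A. Then an element x ∈ L ⊗[A] B is a unit if and only if for every maximal ideal m of B, the image of x under the natural map L ⊗[A] B → L ⊗[A] (B/m) is neither zero nor a zero divisor. -/

import Mathlib

/-- In a finite-dimensional commutative algebra over a field, nonzerodivisors are units. -/
lemma isUnit_of_mem_nonZeroDivisors_of_finiteDimensional
    {K R : Type*} [Field K] [CommRing R] [Algebra K R] [FiniteDimensional K R]
    {y : R} (hy : y ∈ nonZeroDivisors R) : IsUnit y := by
  have hinj : Function.Injective (LinearMap.mulLeft K y) := by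
    intro a b hab
    simp only [LinearMap.mulLeft_apply] at hab
    have h0 : (a - b) * y = 0 := by
      rw [sub_mul, mul_comm a y, mul_comm b y, hab, sub_self]
    exact sub_eq_zero.mp (mem_nonZeroDivisors_iff_right.mp hy _ h0)
  obtain ⟨z, hz⟩ := (LinearMap.injective_iff_surjective).mp hinj 1
  exact IsUnit.of_mul_eq_one z hz

/-- Let `A` be a field, `B` a finite-dimensional commutative `A`-algebra, and
`L` a field extension of `A`.  Then `x ∈ L ⊗[A] B` is a unit if and only if for every maximal
ideal `m` of `B` the image of `x` under the natural map `L ⊗[A] B → L ⊗[A] (B/m)` is neither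
zero nor a zero divisor. -/
theorem isUnit_iff_image_in_residue_baseChange_nonZeroDivisor
    {A B L : Type*} [Field A] [CommRing B] [Algebra A B] [FiniteDimensional A B]
    [Field L] [Algebra A L]
    (x : TensorProduct A L B) :
    IsUnit x ↔ ∀ m : Ideal B, m.IsMaximal →
      (Algebra.TensorProduct.map (AlgHom.id A L) (Ideal.Quotient.mkₐ A m) x ≠ 0 ∧
        Algebra.TensorProduct.map (AlgHom.id A L) (Ideal.Quotient.mkₐ A m) x ∈
          nonZeroDivisors (TensorProduct A L (B ⧸ m))) := by
  constructor
  · intro hx m hm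
    haveI := hm
    have hu : IsUnit (Algebra.TensorProduct.map (AlgHom.id A L) (Ideal.Quotient.mkₐ A m) x) :=
      hx.map _
    exact ⟨hu.ne_zero, hu.mem_nonZeroDivisors⟩
  · intro h
    by_contra hx
    haveI : Nontrivial (TensorProduct A L B) := by
      rcases subsingleton_or_nontrivial (TensorProduct A L B) with hs | hs
      · exact absurd (isUnit_of_subsingleton x) hx
      · exact hs
    obtain ⟨M, hM, hxM⟩ := exists_max_ideal_of_mem_nonunits (mem_nonunits_iff.mpr hx)
    haveI := hM
    set q := Ideal.Quotient.mkₐ A M with hq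
    set g : B →ₐ[A] (TensorProduct A L B ⧸ M) :=
      q.comp Algebra.TensorProduct.includeRight with hg
    set m : Ideal B := RingHom.ker g with hmdef
    haveI : m.IsPrime := RingHom.ker_isPrime g
    haveI : IsArtinianRing B := isArtinian_of_tower A inferInstance
    have hmmax : m.IsMaximal := IsArtinianRing.isMaximal_of_isPrime m
    haveI := hmmax
    let g' : B ⧸ m →ₐ[A] (TensorProduct A L B ⧸ M) :=
      Ideal.Quotient.liftₐ m g (fun a ha => ha)
    let f : L →ₐ[A] (TensorProduct A L B ⧸ M) := q.comp Algebra.TensorProduct.includeLeft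
    let ψ := Algebra.TensorProduct.productMap f g'
    have key : ψ.comp (Algebra.TensorProduct.map (AlgHom.id A L) (Ideal.Quotient.mkₐ A m)) = q := by
      apply Algebra.TensorProduct.ext
      · ext l
        simp [ψ, f, g', q]
      · ext b
        simp only [ψ, f, g', g, q]
        simp [← Algebra.TensorProduct.one_def]
        rfl
    have key' : ψ (Algebra.TensorProduct.map (AlgHom.id A L) (Ideal.Quotient.mkₐ A m) x) = q x :=
      congrFun (congrArg (fun (t : _ →ₐ[A] _) => (t : TensorProduct A L B → _)) key) x
    have hz : q x = 0 := by
      simpa [q] using (Ideal.Quotient.eq_zero_iff_mem).mpr hxM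
    have hu := (isUnit_of_mem_nonZeroDivisors_of_finiteDimensional (K := L) (h m hmmax).2).map ψ
    rw [key', hz] at hu
    exact not_isUnit_zero hu
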